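/- For 0 < α < π, the map φ[α] on M₃(ℂ) is indecomposable: there exists a matrix X ∈ M₃(M₃) such that both X and its partial transpose are positive semidefinite, but (id ⊗ φ[α])(X) is not positive semidefinite. -/

import Mathlib

open ComplexOrder

noncomputable def lam15 (α : ℝ) : ℝ := (2 / 3) * (1 + Real.cos α)
noncomputable def mu15 (α : ℝ) : ℝ := (2 / 3) * (1 - (1 / 2) * Real.cos α - (Real.sqrt 3 / 2) * Real.sin α)
noncomputable def nu15 (α : ℝ) : ℝ := (2 / 3) * (1 - (1 / 2) * Real.cos α + (Real.sqrt 3 / 2) * Real.sin α)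

/-- The map `φ[α]` on `M₃(ℂ)`. -/
noncomputable def phiAlpha15 (α : ℝ) (a : Matrix (Fin 3) (Fin 3) ℂ) : Matrix (Fin 3) (Fin 3) ℂ :=
  Matrix.of fun i j =>
    if i = j then
      (1 / 2 : ℂ) * ((![![lam15 α, mu15 α, nu15 α], ![nu15 α, lam15 α, mu15 α], ![mu15 α, nu15 α, lam15 α]] i 0 : ℝ) * a 0 0
        + (![![lam15 α, mu15 α, nu15 α], ![nu15 α, lam15 α, mu15 α], ![mu15 α, nu15 α, lam15 α]] i 1 : ℝ) * a 1 1
        + (![![lam15 α, mu15 α, nu15 α], ![nu15 α, lam15 α, mu15 α], ![mu15 α, nu15 α, lam15 α]] i 2 : ℝ) * a 2 2)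
    else -(1 / 2 : ℂ) * a i j

/-- `(id ⊗ φ)(X)`: apply `φ` to each `3×3` block of a `9×9` matrix. -/
noncomputable def idTensor (φ : Matrix (Fin 3) (Fin 3) ℂ → Matrix (Fin 3) (Fin 3) ℂ)
    (X : Matrix (Fin 3 × Fin 3) (Fin 3 × Fin 3) ℂ) : Matrix (Fin 3 × Fin 3) (Fin 3 × Fin 3) ℂ :=
  Matrix.of fun a b => φ (Matrix.of fun k l => X (a.1, k) (b.1, l)) a.2 b.2

open Matrix in
/-- Diagonal corrections `p`, `p⁻¹`. -/
noncomputable def dvec15 (q : ℝ) (a : Fin 3 × Fin 3) : ℂ :=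
  if a.2 = a.1 + 1 then (q:ℂ) else if a.2 = a.1 + 2 then ((q:ℂ))⁻¹ else 0

/-- The witness matrix `X(p)`. -/
noncomputable def Xmat15 (q : ℝ) : Matrix (Fin 3 × Fin 3) (Fin 3 × Fin 3) ℂ :=
  Matrix.of fun a b =>
    (if a.2 = a.1 ∧ b.2 = b.1 then (1:ℂ) else 0) + (if a = b then dvec15 q a else 0)

def Amat15 : Matrix (Fin 3 × Fin 3) (Fin 3 × Fin 3) ℂ :=
  Matrix.of fun a b => if a = ((0:Fin 3),(0:Fin 3)) ∧ b.2 = b.1 then (1:ℂ) else 0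

noncomputable def Cmat15 (r : ℝ) : Matrix (Fin 3 × Fin 3) (Fin 3 × Fin 3) ℂ :=
  Matrix.of fun a b =>
    if a.2 = a.1 then (if b = a then (1:ℂ) else 0)
    else if a.2 = a.1 + 1 then (if b = a then ((r:ℝ):ℂ) else if b = (a.2, a.1) then ((r:ℂ))⁻¹ else 0)
    else 0

open Matrix in
lemma XeqA15 (q : ℝ) : Xmat15 q = Amat15ᴴ * Amat15 + Matrix.diagonal (dvec15 q) := by
  ext a b
  simp [Xmat15, Amat15, Matrix.mul_apply, Matrix.conjTranspose_apply,
    Fintype.sum_prod_type, Fin.sum_univ_three, Matrix.diagonal_apply, Prod.ext_iff,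
    apply_ite (starRingEnd ℂ), ite_and, Matrix.diagonal]
  rcases a with ⟨i, k⟩; rcases b with ⟨j, l⟩
  by_cases h1 : k = i <;> by_cases h2 : l = j <;> by_cases h3 : (i,k) = (j,l) <;>
    simp_all [Prod.ext_iff]

open Matrix in
set_option maxHeartbeats 1000000 in
lemma PTeqC15 (q r : ℝ) (hr0 : 0 < r) (hr : r * r = q) :
    (Matrix.of fun a b : Fin 3 × Fin 3 => Xmat15 q (b.1, a.2) (a.1, b.2)) = (Cmat15 r)ᴴ * Cmat15 r := by
  have hrc : ((r:ℝ):ℂ) * r = (q:ℂ) := by push_cast [← hr]; ring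
  have hric : ((r:ℂ))⁻¹ * (r:ℂ)⁻¹ = ((q:ℂ))⁻¹ := by rw [← mul_inv, hrc]
  have hrne : ((r:ℝ):ℂ) ≠ 0 := by exact_mod_cast hr0.ne'
  ext ⟨i, k⟩ ⟨j, l⟩
  fin_cases i <;> fin_cases k <;> fin_cases j <;> fin_cases l <;>
    simp [Xmat15, Cmat15, dvec15, Matrix.mul_apply, Matrix.conjTranspose_apply,
      Fintype.sum_prod_type, Fin.sum_univ_three, Prod.ext_iff,
      map_inv₀, Complex.conj_ofReal, hrc, hric, inv_mul_cancel₀ hrne, mul_inv_cancel₀ hrne]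

noncomputable def wvec15 : Fin 3 × Fin 3 → ℂ := fun a => if a.2 = a.1 then 1 else 0

open Matrix in
set_option maxHeartbeats 1000000 in
lemma qform15 (α q : ℝ) :
    star wvec15 ⬝ᵥ ((idTensor (phiAlpha15 α) (Xmat15 q)) *ᵥ wvec15)
      = (((3:ℝ)/2) * (lam15 α + mu15 α * q + nu15 α * q⁻¹ - 2) : ℝ) := by
  simp [dotProduct, Matrix.mulVec, wvec15, idTensor, phiAlpha15, Xmat15, dvec15,
    Fintype.sum_prod_type, Fin.sum_univ_three, Prod.ext_iff]
  ring

lemma dvec15_nonneg (q : ℝ) (hq : 0 < q) (a : Fin 3 × Fin 3) : 0 ≤ dvec15 q a := by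
  unfold dvec15
  split_ifs
  · exact Complex.zero_le_real.mpr hq.le
  · rw [← Complex.ofReal_inv]; exact Complex.zero_le_real.mpr (inv_nonneg.mpr hq.le)
  · exact le_refl 0

/-- For `0 < α < π`, the map `φ[α]` is indecomposable: there is an `X ∈ M₃(M₃)` with `X` and
its partial transpose positive semidefinite, yet `(id ⊗ φ[α])(X)` not positive semidefinite. -/
theorem stmt_15 (α : ℝ) (h0 : 0 < α) (hπ : α < Real.pi) :
    ∃ X : Matrix (Fin 3 × Fin 3) (Fin 3 × Fin 3) ℂ,
      X.PosSemidef ∧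
      (Matrix.of fun a b : Fin 3 × Fin 3 => X (b.1, a.2) (a.1, b.2)).PosSemidef ∧
      ¬ (idTensor (phiAlpha15 α) X).PosSemidef := by
  have hs : 0 < Real.sin α := Real.sin_pos_of_pos_of_lt_pi h0 hπ
  have h1 : Real.cos (α - Real.pi/3) ≤ 1 := Real.cos_le_one _
  rw [Real.cos_sub, Real.cos_pi_div_three, Real.sin_pi_div_three] at h1
  have hm : 0 ≤ mu15 α := by unfold mu15; nlinarith
  have h3 : (0:ℝ) < Real.sqrt 3 := Real.sqrt_pos.mpr (by norm_num)
  have hnm : mu15 α < nu15 α := by unfold mu15 nu15; nlinarith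
  have hsum : lam15 α + mu15 α + nu15 α = 2 := by unfold lam15 mu15 nu15; ring
  set m := mu15 α with hmdef; set n := nu15 α with hndef
  have hn : 0 < n := lt_of_le_of_lt hm hnm
  have hmn : 0 < m + n := by linarith
  set q : ℝ := 2 * n / (m + n) with hqdef
  have hq : 0 < q := by positivity
  have key : lam15 α + m * q + n * q⁻¹ < 2 := by
    have hq1 : 1 < q := by rw [hqdef, lt_div_iff₀ hmn]; linarith
    have hq2 : m * q < n := by
      rw [hqdef, ← mul_div_assoc, div_lt_iff₀ hmn]; nlinarith
    have h4 : m * q * q + n < (m + n) * q := by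
      nlinarith [mul_pos (sub_pos.mpr hq2) (sub_pos.mpr hq1)]
    have h5 : m * q + n / q = (m * q * q + n) / q := by field_simp
    have h6 : m * q + n / q < m + n := by rw [h5, div_lt_iff₀ hq]; linarith
    rw [← div_eq_mul_inv]; linarith
  refine ⟨Xmat15 q, ?_, ?_, ?_⟩
  · rw [XeqA15]
    exact (Matrix.posSemidef_conjTranspose_mul_self Amat15).add
      (Matrix.posSemidef_diagonal_iff.mpr (dvec15_nonneg q hq))
  · rw [PTeqC15 q (Real.sqrt q) (Real.sqrt_pos.mpr hq) (Real.mul_self_sqrt hq.le)]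
    exact Matrix.posSemidef_conjTranspose_mul_self _
  · intro h
    have hw := h.dotProduct_mulVec_nonneg wvec15
    rw [qform15, Complex.zero_le_real] at hw
    nlinarith
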